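/- In the 3-graph on X ∪ Y ∪ Z with all edges of types XXX, XYY, YYY, ZXX (X, Y, Z disjoint and nonempty), every edge of type XXX or ZXX is tightly connected to every other edge of type XXX or ZXX, provided |X| ≥ 3. -/

import Mathlib

open Finset

/-- Tight connectivity between edges within an edge set `E` of a 3-graph. -/
def TightConnIn {V : Type*} [DecidableEq V] (E : Finset (Finset V)) (e f : Finset V) : Prop :=
  Relation.ReflTransGen (fun a b => a ∈ E ∧ b ∈ E ∧ (a ∩ b).card = 2) e f

theorem stmt_19 {V : Type*} [Fintype V] [DecidableEq V] (X Y Z : Finset V)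
    (hXY : Disjoint X Y) (hXZ : Disjoint X Z) (hYZ : Disjoint Y Z)
    (hUnion : X ∪ Y ∪ Z = Finset.univ)
    (hX : X.Nonempty) (hY : Y.Nonempty) (hZ : Z.Nonempty)
    (hX3 : 3 ≤ X.card)
    (E : Finset (Finset V))
    (hE : E = (Finset.univ.powersetCard 3).filter (fun e =>
      e ⊆ X ∨ ((e ∩ X).card = 1 ∧ (e ∩ Y).card = 2) ∨ e ⊆ Y ∨
        ((e ∩ Z).card = 1 ∧ (e ∩ X).card = 2))) :
    ∀ e ∈ E, ∀ f ∈ E,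
      (e ⊆ X ∨ ((e ∩ Z).card = 1 ∧ (e ∩ X).card = 2)) →
      (f ⊆ X ∨ ((f ∩ Z).card = 1 ∧ (f ∩ X).card = 2)) →
      TightConnIn E e f := by
  -- membership of 3-subsets of X in E
  have memE : ∀ S : Finset V, S ⊆ X → S.card = 3 → S ∈ E := by
    intro S hS hc
    rw [hE, Finset.mem_filter, Finset.mem_powersetCard]
    exact ⟨⟨Finset.subset_univ _, hc⟩, Or.inl hS⟩
  have cardE : ∀ e ∈ E, e.card = 3 := by
    intro e he
    rw [hE, Finset.mem_filter, Finset.mem_powersetCard] at he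
    exact he.1.2
  -- symmetry of the step relation
  have hsymm : Symmetric (fun a b : Finset V => a ∈ E ∧ b ∈ E ∧ (a ∩ b).card = 2) := by
    intro a b ⟨ha, hb, hc⟩
    exact ⟨hb, ha, by rwa [Finset.inter_comm]⟩
  -- any two 3-subsets of X are tightly connected
  have xxx : ∀ n : ℕ, ∀ A B : Finset V, A ⊆ X → B ⊆ X → A.card = 3 → B.card = 3 →
      (B \ A).card ≤ n → TightConnIn E A B := by
    intro n
    induction n with
    | zero =>
      intro A B hA hB hAc hBc hle
      have : B \ A = ∅ := Finset.card_eq_zero.mp (Nat.le_zero.mp hle)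
      have hBA : B ⊆ A := by
        intro x hx
        by_contra hxA
        exact absurd (Finset.mem_sdiff.mpr ⟨hx, hxA⟩) (by simp [this])
      have : B = A := Finset.eq_of_subset_of_card_le hBA (by omega)
      rw [this]
      exact Relation.ReflTransGen.refl
    | succ n ih =>
      intro A B hA hB hAc hBc hle
      by_cases hBA : B ⊆ A
      · have : B = A := Finset.eq_of_subset_of_card_le hBA (by omega)
        rw [this]
        exact Relation.ReflTransGen.refl
      · obtain ⟨b, hbB, hbA⟩ := Finset.not_subset.mp hBA
        have hABne : ¬ A ⊆ B := by
          intro h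
          have : A = B := Finset.eq_of_subset_of_card_le h (by omega)
          exact hbA (this ▸ hbB)
        obtain ⟨a, haA, haB⟩ := Finset.not_subset.mp hABne
        set A' := insert b (A.erase a) with hA'
        have hbnotin : b ∉ A.erase a := fun h => hbA (Finset.mem_of_mem_erase h)
        have hA'c : A'.card = 3 := by
          rw [hA', Finset.card_insert_of_notMem hbnotin, Finset.card_erase_of_mem haA, hAc]
        have hA'X : A' ⊆ X := by
          intro x hx
          rw [hA', Finset.mem_insert] at hx
          rcases hx with rfl | hx
          · exact hB hbB
          · exact hA (Finset.mem_of_mem_erase hx)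
        have hinter : A ∩ A' = A.erase a := by
          ext x
          simp only [hA', Finset.mem_inter, Finset.mem_insert, Finset.mem_erase]
          constructor
          · rintro ⟨hxA, rfl | ⟨hxa, _⟩⟩
            · exact absurd hxA hbA
            · exact ⟨hxa, hxA⟩
          · rintro ⟨hxa, hxA⟩
            exact ⟨hxA, Or.inr ⟨hxa, hxA⟩⟩
        have hstep : A ∈ E ∧ A' ∈ E ∧ (A ∩ A').card = 2 := by
          refine ⟨memE A hA hAc, memE A' hA'X hA'c, ?_⟩
          rw [hinter, Finset.card_erase_of_mem haA, hAc]
        have hsd : B \ A' = (B \ A).erase b := by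
          ext x
          simp only [hA', Finset.mem_sdiff, Finset.mem_insert, Finset.mem_erase, not_or]
          constructor
          · rintro ⟨hxB, hxb, hxe⟩
            refine ⟨hxb, hxB, fun hxA => hxe ⟨?_, hxA⟩⟩
            rintro rfl
            exact haB hxB
          · rintro ⟨hxb, hxB, hxA⟩
            exact ⟨hxB, hxb, fun h => hxA h.2⟩
        have hlt : (B \ A').card ≤ n := by
          rw [hsd, Finset.card_erase_of_mem (Finset.mem_sdiff.mpr ⟨hbB, hbA⟩)]
          omega
        exact Relation.ReflTransGen.head hstep (ih A' B hA'X hB hA'c hBc hlt)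
  -- ZXX edges step to an XXX edge
  have zxx : ∀ e ∈ E, (e ∩ Z).card = 1 → (e ∩ X).card = 2 →
      ∃ A : Finset V, A ⊆ X ∧ A.card = 3 ∧ TightConnIn E e A := by
    intro e he hZ1 hX2
    have hss : e ∩ X ⊂ X :=
      lt_of_le_of_ne Finset.inter_subset_right (fun h => by
        rw [h] at hX2; omega)
    obtain ⟨x3, hx3X, hx3n⟩ := Finset.exists_of_ssubset hss
    have hx3e : x3 ∉ e := fun h => hx3n (Finset.mem_inter.mpr ⟨h, hx3X⟩)
    set A := insert x3 (e ∩ X) with hA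
    have hxA : x3 ∉ e ∩ X := hx3n
    have hAc : A.card = 3 := by
      rw [hA, Finset.card_insert_of_notMem hxA, hX2]
    have hAX : A ⊆ X := by
      intro x hx
      rw [hA, Finset.mem_insert] at hx
      rcases hx with rfl | hx
      · exact hx3X
      · exact Finset.inter_subset_right hx
    have hinter : e ∩ A = e ∩ X := by
      ext x
      simp only [hA, Finset.mem_inter, Finset.mem_insert]
      constructor
      · rintro ⟨hxe, rfl | ⟨_, hxX⟩⟩
        · exact absurd hxe hx3e
        · exact ⟨hxe, hxX⟩
      · rintro ⟨hxe, hxX⟩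
        exact ⟨hxe, Or.inr ⟨hxe, hxX⟩⟩
    refine ⟨A, hAX, hAc, Relation.ReflTransGen.single ⟨he, memE A hAX hAc, ?_⟩⟩
    rw [hinter, hX2]
  -- put it together
  intro e he f hf he' hf'
  have getA : ∀ g ∈ E, (g ⊆ X ∨ ((g ∩ Z).card = 1 ∧ (g ∩ X).card = 2)) →
      ∃ A : Finset V, A ⊆ X ∧ A.card = 3 ∧ TightConnIn E g A := by
    intro g hg hg'
    rcases hg' with hgX | ⟨h1, h2⟩
    · exact ⟨g, hgX, cardE g hg, Relation.ReflTransGen.refl⟩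
    · exact zxx g hg h1 h2
  obtain ⟨A, hAX, hAc, hconnA⟩ := getA e he he'
  obtain ⟨B, hBX, hBc, hconnB⟩ := getA f hf hf'
  have hmid : TightConnIn E A B := xxx (B \ A).card A B hAX hBX hAc hBc le_rfl
  exact hconnA.trans (hmid.trans ((@Relation.ReflTransGen.symmetric _ _ ⟨fun a b h => hsymm h⟩).symm _ _ hconnB))
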